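/- arXiv:2604.02866 — 2 statements merged into one kernel-verified Lean document; each statement's English description precedes it below -/
import Mathlib

section
/- Generalised indivisibility of disjunction: let D₁, …, D_k be propositional formulas over V and let S be a nonempty proper subset of {1, …, k}. If there exist an index j ∉ S and a world w such that w ⊨ D_j and w ⊭ D_i for every i ∈ S, then I(⋁_{i∈S} D_i) > I(D₁ ∨ ⋯ ∨ D_k); that is, extracting any such proper sub-disjunction from the full disjunction is a bad cut. -/
/-- Propositional formulas over atoms `V`: `var v | ¬φ | φ ∧ φ | φ ∨ φ`. -/
inductive PropForm (V : Type*) where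
  | var : V → PropForm V
  | not : PropForm V → PropForm V
  | and : PropForm V → PropForm V → PropForm V
  | or  : PropForm V → PropForm V → PropForm V

namespace PropForm

variable {V : Type*}

/-- Boolean semantics: `w ⊨ φ`. -/
def eval (w : V → Bool) : PropForm V → Bool
  | var v => w v
  | not φ => !(eval w φ)
  | and φ ψ => eval w φ && eval w ψ
  | or φ ψ => eval w φ || eval w ψ

end PropForm

variable {V : Type*}

/-- `Content φ` : the finite set of worlds (valuations `V → Bool`) satisfying `φ`. -/
def Content [Fintype V] [DecidableEq V] (φ : PropForm V) : Finset (V → Bool) :=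
  Finset.univ.filter fun w => φ.eval w = true

/-- Information content `I(φ) = -log₂(|Content φ| / 2 ^ n)` in the extended reals,
with `I(φ) = +∞` when `Content φ = ∅`. -/
noncomputable def infoContent [Fintype V] [DecidableEq V] (φ : PropForm V) : EReal :=
  if (Content φ).card = 0 then ⊤
  else (((- Real.logb 2 (((Content φ).card : ℝ) / 2 ^ Fintype.card V)) : ℝ) : EReal)

/-- The disjunction `D 0 ∨ D 1 ∨ ⋯ ∨ D (k-1)` (left-associated), for `k ≥ 1`. -/
def bigOr {k : ℕ} (hk : 0 < k) (D : Fin k → PropForm V) : PropForm V :=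
  ((List.ofFn D).tail).foldl PropForm.or (D ⟨0, hk⟩)

/-- The conjunction `C 0 ∧ C 1 ∧ ⋯ ∧ C (m-1)` (left-associated), for `m ≥ 1`. -/
def bigAnd {m : ℕ} (hm : 0 < m) (C : Fin m → PropForm V) : PropForm V :=
  ((List.ofFn C).tail).foldl PropForm.and (C ⟨0, hm⟩)

/-- The disjunction `⋁_{i ∈ S} D i` over a nonempty finite index set `S`. -/
noncomputable def finsetOr {k : ℕ} (D : Fin k → PropForm V) (S : Finset (Fin k)) (hS : S.Nonempty) :
    PropForm V :=
  (((S.erase (S.min' hS)).toList).map D).foldl PropForm.or (D (S.min' hS))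

/-- A literal: a positive or negated atom. -/
inductive Literal (V : Type*) where
  | pos : V → Literal V
  | neg : V → Literal V

/-- The underlying atom of a literal. -/
def Literal.atom : Literal V → V
  | .pos v => v
  | .neg v => v

/-- The formula corresponding to a literal. -/
def Literal.toForm : Literal V → PropForm V
  | .pos v => .var v
  | .neg v => .not (.var v)

/-- `φ` is a literal formula: `var v` or `¬(var v)`. -/
inductive IsLiteral : PropForm V → Prop
  | var (v : V) : IsLiteral (.var v)
  | negVar (v : V) : IsLiteral (.not (.var v))

/-- `φ` is a clause: a finite disjunction of literals. -/
inductive IsClause : PropForm V → Prop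
  | lit {φ : PropForm V} : IsLiteral φ → IsClause φ
  | or {φ ψ : PropForm V} : IsClause φ → IsClause ψ → IsClause (φ.or ψ)

/-- Immediate (direct) subformula relation. -/
inductive DirectSubform : PropForm V → PropForm V → Prop
  | notArg (φ : PropForm V) : DirectSubform φ (.not φ)
  | andLeft (φ ψ : PropForm V) : DirectSubform φ (.and φ ψ)
  | andRight (φ ψ : PropForm V) : DirectSubform ψ (.and φ ψ)
  | orLeft (φ ψ : PropForm V) : DirectSubform φ (.or φ ψ)
  | orRight (φ ψ : PropForm V) : DirectSubform ψ (.or φ ψ)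

/-- `ψ` is a strict subformula of `φ`. -/
def StrictSubform (ψ φ : PropForm V) : Prop := Relation.TransGen DirectSubform ψ φ

/-- `φ` is atomic: it admits no safe cut, i.e. every strict subformula `ψ`
satisfies `I(ψ) ≥ I(φ)`. -/
def Atomic [Fintype V] [DecidableEq V] (φ : PropForm V) : Prop :=
  ∀ ψ : PropForm V, StrictSubform ψ φ → infoContent φ ≤ infoContent ψ


lemma eval_foldl_or {V : Type*} (w : V → Bool) (l : List (PropForm V)) (a : PropForm V) :
    (l.foldl PropForm.or a).eval w = (a.eval w || l.any (·.eval w)) := by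
  induction l generalizing a with
  | nil => simp
  | cons b t ih =>
      simp [List.foldl_cons, ih, PropForm.eval, Bool.or_assoc]

lemma eval_bigOr {V : Type*} {k : ℕ} (hk : 0 < k) (D : Fin k → PropForm V) (w : V → Bool) :
    (bigOr hk D).eval w = true ↔ ∃ i, (D i).eval w = true := by
  unfold bigOr
  rw [eval_foldl_or]
  have hlist : List.ofFn D = D ⟨0, hk⟩ :: (List.ofFn D).tail := by
    cases k with
    | zero => omega
    | succ n => simp [List.ofFn_succ]
  constructor
  · intro h
    rcases Bool.or_eq_true_iff.mp h with h | h
    · exact ⟨_, h⟩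
    · rcases List.any_eq_true.mp h with ⟨φ, hφ, he⟩
      have : φ ∈ List.ofFn D := by rw [hlist]; exact List.mem_cons_of_mem _ hφ
      rcases List.mem_ofFn.mp this with ⟨i, rfl⟩
      exact ⟨i, by simpa using he⟩
  · rintro ⟨i, hi⟩
    have : D i ∈ List.ofFn D := List.mem_ofFn.mpr ⟨i, rfl⟩
    rw [hlist] at this
    rcases List.mem_cons.mp this with h | h
    · rw [← h]; simp [hi]
    · refine Bool.or_eq_true_iff.mpr (Or.inr ?_)
      exact List.any_eq_true.mpr ⟨D i, h, by simpa using hi⟩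

lemma eval_finsetOr {V : Type*} {k : ℕ} (D : Fin k → PropForm V) (S : Finset (Fin k))
    (hS : S.Nonempty) (w : V → Bool) :
    (finsetOr D S hS).eval w = true ↔ ∃ i ∈ S, (D i).eval w = true := by
  unfold finsetOr
  rw [eval_foldl_or]
  constructor
  · intro h
    rcases Bool.or_eq_true_iff.mp h with h | h
    · exact ⟨_, S.min'_mem hS, h⟩
    · rcases List.any_eq_true.mp h with ⟨φ, hφ, he⟩
      rcases List.mem_map.mp hφ with ⟨i, hi, rfl⟩
      have : i ∈ S := Finset.mem_of_mem_erase (Finset.mem_toList.mp hi)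
      exact ⟨i, this, by simpa using he⟩
  · rintro ⟨i, hiS, hi⟩
    by_cases hmin : i = S.min' hS
    · rw [← hmin]; simp [hi]
    · refine Bool.or_eq_true_iff.mpr (Or.inr ?_)
      refine List.any_eq_true.mpr ⟨D i, List.mem_map.mpr ⟨i, ?_, rfl⟩, by simpa using hi⟩
      exact Finset.mem_toList.mpr (Finset.mem_erase.mpr ⟨hmin, hiS⟩)

lemma info_lt_of_ssubset {V : Type*} [Fintype V] [DecidableEq V] {φ ψ : PropForm V}
    (hsub : Content ψ ⊆ Content φ) (hne : (Content ψ).card < (Content φ).card) :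
    infoContent φ < infoContent ψ := by
  unfold infoContent
  have hφ0 : (Content φ).card ≠ 0 := by omega
  rw [if_neg hφ0]
  by_cases hψ0 : (Content ψ).card = 0
  · rw [if_pos hψ0]; exact EReal.coe_lt_top _
  · rw [if_neg hψ0]
    rw [EReal.coe_lt_coe_iff]
    have h2 : (0:ℝ) < 2 ^ Fintype.card V := by positivity
    have hψpos : (0:ℝ) < ((Content ψ).card : ℝ) / 2 ^ Fintype.card V := by
      apply div_pos _ h2
      exact_mod_cast Nat.pos_of_ne_zero hψ0
    have hlt : ((Content ψ).card : ℝ) / 2 ^ Fintype.card V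
        < ((Content φ).card : ℝ) / 2 ^ Fintype.card V := by
      gcongr
    exact neg_lt_neg (Real.logb_lt_logb one_lt_two hψpos hlt)

/-- Generalised indivisibility of disjunction: for formulas
`D 0, …, D (k-1)` and a nonempty proper subset `S` of indices, if some index `j ∉ S`
and world `w` satisfy `w ⊨ D j` and `w ⊭ D i` for all `i ∈ S`, then
`I(⋁_{i ∈ S} D i) > I(D 0 ∨ ⋯ ∨ D (k-1))`: extracting the sub-disjunction is a bad cut. -/
theorem gen_disj_bad_cut {V : Type*} [Fintype V] [DecidableEq V] {k : ℕ}
    (D : Fin k → PropForm V) (S : Finset (Fin k)) (hS : S.Nonempty)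
    (hS' : S ≠ Finset.univ)
    (h : ∃ j ∉ S, ∃ w : V → Bool,
      (D j).eval w = true ∧ ∀ i ∈ S, (D i).eval w = false) :
    infoContent (bigOr (hS.choose.pos) D) < infoContent (finsetOr D S hS) := by
  obtain ⟨j, hjS, w, hwj, hwS⟩ := h
  have hk : 0 < k := hS.choose.pos
  have hsub : Content (finsetOr D S hS) ⊆ Content (bigOr hk D) := by
    intro x hx
    simp only [Content, Finset.mem_filter, Finset.mem_univ, true_and] at hx ⊢
    rw [eval_bigOr]
    rcases (eval_finsetOr D S hS x).mp hx with ⟨i, _, hi⟩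
    exact ⟨i, hi⟩
  have hwmem : w ∈ Content (bigOr hk D) := by
    simp only [Content, Finset.mem_filter, Finset.mem_univ, true_and]
    exact (eval_bigOr hk D w).mpr ⟨j, hwj⟩
  have hwnmem : w ∉ Content (finsetOr D S hS) := by
    simp only [Content, Finset.mem_filter, Finset.mem_univ, true_and]
    intro hcon
    rcases (eval_finsetOr D S hS w).mp hcon with ⟨i, hiS, hi⟩
    rw [hwS i hiS] at hi
    exact Bool.false_ne_true hi
  exact info_lt_of_ssubset hsub
    (Finset.card_lt_card (Finset.ssubset_iff_of_subset hsub |>.mpr ⟨w, hwmem, hwnmem⟩))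
end

section
/- Structural characterisation of atomicity (backward direction): let φ = L₁ ∨ ⋯ ∨ L_k be a single clause, i.e. a disjunction of k ≥ 1 literals whose underlying atoms are pairwise distinct. Then φ is atomic: every strict subformula ψ of φ satisfies I(ψ) ≥ I(φ), so φ admits no safe cut. -/
variable {V : Type*}

section Aux

variable {V : Type*} [Fintype V] [DecidableEq V]

set_option linter.unusedSectionVars false

lemma info_antitone {φ ψ : PropForm V}
    (h : (Content ψ).card ≤ (Content φ).card) : infoContent φ ≤ infoContent ψ := by
  unfold infoContent
  by_cases hψ : (Content ψ).card = 0
  · simp [hψ]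
  · have hφ : (Content φ).card ≠ 0 := by omega
    rw [if_neg hφ, if_neg hψ]
    have h2 : (0:ℝ) < 2 ^ Fintype.card V := by positivity
    have hψ' : (0:ℝ) < ((Content ψ).card : ℝ) := by
      have : 0 < (Content ψ).card := Nat.pos_of_ne_zero hψ
      exact_mod_cast this
    have : - Real.logb 2 (((Content φ).card : ℝ) / 2 ^ Fintype.card V)
        ≤ - Real.logb 2 (((Content ψ).card : ℝ) / 2 ^ Fintype.card V) := by
      apply neg_le_neg
      apply Real.logb_le_logb_of_le one_lt_two (by positivity)
      apply div_le_div_of_nonneg_right (c := (2:ℝ) ^ Fintype.card V) ?_ h2.le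
      exact_mod_cast h
    exact_mod_cast this

lemma no_subform_var {ψ : PropForm V} {v : V} : ¬ StrictSubform ψ (.var v) := by
  intro h
  cases h with
  | single h => cases h
  | tail _ h => cases h

lemma key {φ : PropForm V} (hc : IsClause φ) : ∀ {ψ}, StrictSubform ψ φ →
    (∀ w, ψ.eval w = true → φ.eval w = true) ∨
    (∃ v, ψ = .var v ∧ ∀ w, w v = false → φ.eval w = true) := by
  induction hc with
  | lit hl =>
    cases hl with
    | var v => intro ψ h; exact absurd h no_subform_var
    | negVar v =>
      intro ψ h
      cases h with
      | single h =>
        cases h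
        exact Or.inr ⟨v, rfl, fun w hw => by simp [PropForm.eval, hw]⟩
      | tail h h' =>
        cases h'
        exact absurd h no_subform_var
  | or hc1 hc2 ih1 ih2 =>
    intro ψ h
    have lift1 : ∀ {a : PropForm V}, ((∀ w, ψ.eval w = true → a.eval w = true) ∨
        (∃ v, ψ = .var v ∧ ∀ w, w v = false → a.eval w = true)) →
        ∀ {b : PropForm V},
        ((∀ w, ψ.eval w = true → (PropForm.or a b).eval w = true) ∨
        (∃ v, ψ = .var v ∧ ∀ w, w v = false → (PropForm.or a b).eval w = true)) ∧
        ((∀ w, ψ.eval w = true → (PropForm.or b a).eval w = true) ∨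
        (∃ v, ψ = .var v ∧ ∀ w, w v = false → (PropForm.or b a).eval w = true)) := by
      intro a h' b
      obtain h | ⟨v, hv, h⟩ := h'
      · exact ⟨Or.inl fun w hw => by simp [PropForm.eval, h w hw],
          Or.inl fun w hw => by simp [PropForm.eval, h w hw]⟩
      · exact ⟨Or.inr ⟨v, hv, fun w hw => by simp [PropForm.eval, h w hw]⟩,
          Or.inr ⟨v, hv, fun w hw => by simp [PropForm.eval, h w hw]⟩⟩
    cases h with
    | single h =>
      cases h with
      | orLeft => exact Or.inl fun w hw => by simp [PropForm.eval, hw]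
      | orRight => exact Or.inl fun w hw => by simp [PropForm.eval, hw]
    | tail h h' =>
      cases h' with
      | orLeft => exact (lift1 (ih1 h)).1
      | orRight => exact (lift1 (ih2 h)).2

lemma card_var_eq {v : V} :
    (Content (PropForm.var v)).card
      = (Finset.univ.filter fun w : V → Bool => w v = false).card := by
  apply Finset.card_nbij' (fun w => Function.update w v false)
    (fun w => Function.update w v true)
  · intro w _; simp
  · intro w _; rw [Finset.mem_coe]; simp only [Content, Finset.mem_filter]; simp [PropForm.eval]
  · intro w hw; rw [Finset.mem_coe] at hw; simp only [Content, Finset.mem_filter] at hw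
    simp [Content, PropForm.eval] at hw
    beta_reduce; rw [Function.update_idem, ← hw, Function.update_eq_self]
  · intro w hw
    simp at hw
    beta_reduce; rw [Function.update_idem, ← hw, Function.update_eq_self]

lemma bigOr_clause {k : ℕ} (hk : 0 < k) (L : Fin k → Literal V) :
    IsClause (bigOr hk fun i => (L i).toForm) := by
  have hlit : ∀ i, IsClause (L i).toForm := by
    intro i
    cases hL : L i with
    | pos v => exact IsClause.lit (IsLiteral.var v)
    | neg v => exact IsClause.lit (IsLiteral.negVar v)
  unfold bigOr
  have main : ∀ (l : List (PropForm V)) (a : PropForm V), (∀ x ∈ l, IsClause x) →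
      IsClause a → IsClause (l.foldl PropForm.or a) := by
    intro l
    induction l with
    | nil => intro a _ ha; exact ha
    | cons x xs ih =>
      intro a hl ha
      exact ih _ (fun y hy => hl y (List.mem_cons_of_mem _ hy))
        (IsClause.or ha (hl x List.mem_cons_self))
  apply main
  · intro x hx
    have hx' := List.mem_of_mem_tail hx
    rw [List.mem_ofFn] at hx'
    obtain ⟨i, rfl⟩ := hx'
    exact hlit i
  · exact hlit _

end Aux

/-- Structural characterisation of atomicity (backward direction):
a single clause `φ = L 0 ∨ ⋯ ∨ L (k-1)` of `k ≥ 1` literals with pairwise distinct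
atoms is atomic: every strict subformula `ψ` of `φ` satisfies `I(ψ) ≥ I(φ)`,
so `φ` admits no safe cut. -/
theorem clause_atomic {V : Type*} [Fintype V] [DecidableEq V] {k : ℕ}
    (hk : 0 < k) (L : Fin k → Literal V)
    (hdist : Function.Injective fun i => (L i).atom) :
    Atomic (bigOr hk fun i => (L i).toForm) := by
  intro ψ hψ
  rcases key (bigOr_clause hk L) hψ with h | ⟨v, rfl, h⟩
  · apply info_antitone
    apply Finset.card_le_card
    intro w hw
    simp [Content] at hw ⊢
    exact h w hw
  · apply info_antitone
    rw [card_var_eq]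
    apply Finset.card_le_card
    intro w hw
    simp [Content] at hw ⊢
    exact h w hw
end
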